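/- Fix N ≥ 1 and let G_N(t, y) = (4πt)^{−N/2} e^{−|y|²/(4t)} for t > 0, y ∈ ℝ^N. Let Γ be a directed graph without self-loops with n vertices and m edges (head and tail maps h, t), let α_e (e ∈ Γ₁) be multi-indices in ℕ^N, and let Φ be a smooth compactly supported function on (ℝ^N)^n. Then the function F : (0,∞)^m → ℝ defined by F((t_e)) = ∫_{(ℝ^N)^n} Π_{e∈Γ₁} (∂_y^{α_e} G_N)(t_e, y^{h(e)} − y^{t(e)}) · Φ(y^1, …, y^n) dy is a smooth function of the Schwinger parameters (t_e) on (0,∞)^m. -/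

import Mathlib

open Matrix MeasureTheory
open scoped BigOperators Classical

/-- A directed graph with `n + 1` vertices (indexed by `Fin (n + 1)`) and `m` edges
(indexed by `Fin m`), given by head and tail maps and having no self-loops. -/
structure DGraph (n m : ℕ) where
  head : Fin m → Fin (n + 1)
  tail : Fin m → Fin (n + 1)
  no_self_loop : ∀ e, head e ≠ tail e

namespace DGraph

variable {n m : ℕ}

/-- The incidence matrix: `ρ e i = 1` if `head e = i`, `-1` if `tail e = i`, `0` otherwise. -/
def inc (G : DGraph n m) : Matrix (Fin m) (Fin (n + 1)) ℝ := fun e i =>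
  if G.head e = i then 1 else if G.tail e = i then -1 else 0

/-- The underlying undirected (simple) adjacency graph determined by a set of edges. -/
def adjGraph (G : DGraph n m) (S : Set (Fin m)) : SimpleGraph (Fin (n + 1)) :=
  SimpleGraph.fromRel (fun i j => ∃ e ∈ S, G.head e = i ∧ G.tail e = j)

/-- Connectedness of the underlying undirected multigraph. -/
def Conn (G : DGraph n m) : Prop := (G.adjGraph Set.univ).Connected

/-- A spanning tree: a set of `n` edges (one fewer than the number `n + 1` of vertices)
whose edges connect all the vertices. -/
def IsSpanningTree (G : DGraph n m) (T : Finset (Fin m)) : Prop :=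
  T.card = n ∧ (G.adjGraph (T : Set (Fin m))).Connected

/-- The weighted Laplacian `M_Γ(t)_{ij} = ∑_e ρ^e_i (1/t_e) ρ^e_j` over the first `n`
vertices (the last vertex deleted). -/
noncomputable def lap (G : DGraph n m) (t : Fin m → ℝ) : Matrix (Fin n) (Fin n) ℝ :=
  fun i j => ∑ e, G.inc e i.castSucc * (1 / t e) * G.inc e j.castSucc

/-- The reduced incidence matrix: delete the column of the last vertex. -/
def redInc (G : DGraph n m) : Matrix (Fin m) (Fin n) ℝ := fun e i => G.inc e i.castSucc

end DGraph

/-- The heat kernel `G_N(t, y) = (4πt)^{-N/2} e^{-|y|²/(4t)}` on `ℝ^N`. -/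
noncomputable def gaussKernel (N : ℕ) (t : ℝ) (y : Fin N → ℝ) : ℝ :=
  (4 * Real.pi * t) ^ (-(N : ℝ) / 2) * Real.exp (-(∑ k, (y k) ^ 2) / (4 * t))

/-- The partial derivative in the `k`-th coordinate. -/
noncomputable def pderiv' {N : ℕ} (k : Fin N) (f : (Fin N → ℝ) → ℝ) :
    (Fin N → ℝ) → ℝ :=
  fun y => deriv (fun s => f (Function.update y k s)) (y k)

/-- The multi-index partial derivative `∂_y^α`. -/
noncomputable def mderiv {N : ℕ} (α : Fin N → ℕ) (f : (Fin N → ℝ) → ℝ) :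
    (Fin N → ℝ) → ℝ :=
  (List.finRange N).foldr (fun k g => (pderiv' k)^[α k] g) f

open Set Function

section Aux
variable {P : Type*} [NormedAddCommGroup P] [NormedSpace ℝ P]

lemma contDiffOn_pderiv' {N : ℕ} (k : Fin N) {F : P → (Fin N → ℝ) → ℝ} {s : Set P}
    (hs : IsOpen s)
    (hF : ContDiffOn ℝ (⊤ : ℕ∞) (uncurry F) (s ×ˢ (univ : Set (Fin N → ℝ)))) :
    ContDiffOn ℝ (⊤ : ℕ∞) (uncurry fun p => pderiv' k (F p)) (s ×ˢ univ) := by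
  have hso : IsOpen (s ×ˢ (univ : Set (Fin N → ℝ))) := hs.prod isOpen_univ
  have h1 : ContDiffOn ℝ (⊤ : ℕ∞) (fderiv ℝ (uncurry F)) (s ×ˢ univ) :=
    hF.fderiv_of_isOpen hso (by simp)
  have h2 : ContDiffOn ℝ (⊤ : ℕ∞)
      (fun q => fderiv ℝ (uncurry F) q ((0 : P), Pi.single k 1)) (s ×ˢ univ) :=
    h1.clm_apply contDiffOn_const
  refine h2.congr ?_
  rintro ⟨p, y⟩ ⟨hp, -⟩
  have hdiff : DifferentiableAt ℝ (uncurry F) (p, y) :=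
    ((hF (p, y) ⟨hp, mem_univ _⟩).contDiffAt (hso.mem_nhds ⟨hp, mem_univ _⟩)).differentiableAt
      (by simp)
  have hc : HasDerivAt (fun t : ℝ => ((p, Function.update y k t) : P × (Fin N → ℝ)))
      ((0 : P), Pi.single k 1) (y k) :=
    (hasDerivAt_const (y k) p).prodMk (hasDerivAt_update y k (y k))
  have hyy : Function.update y k (y k) = y := Function.update_eq_self k y
  rw [← hyy] at hdiff
  have h3 := hdiff.hasFDerivAt.comp_hasDerivAt (y k) hc
  rw [hyy] at h3
  show pderiv' k (F p) y = _
  unfold pderiv'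
  exact h3.deriv

end Aux

section Aux2
variable {P : Type*} [NormedAddCommGroup P] [NormedSpace ℝ P]

lemma contDiffOn_pderiv'_iter {N : ℕ} (k : Fin N) (j : ℕ) {F : P → (Fin N → ℝ) → ℝ}
    {s : Set P} (hs : IsOpen s)
    (hF : ContDiffOn ℝ (⊤ : ℕ∞) (uncurry F) (s ×ˢ (univ : Set (Fin N → ℝ)))) :
    ContDiffOn ℝ (⊤ : ℕ∞) (uncurry fun p => (pderiv' k)^[j] (F p)) (s ×ˢ univ) := by
  induction j generalizing F with
  | zero => simpa using hF
  | succ j ih =>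
      have := contDiffOn_pderiv' k hs (F := fun p => (pderiv' k)^[j] (F p)) (ih hF)
      simpa [Function.iterate_succ_apply'] using this

lemma contDiffOn_foldr {N : ℕ} (α : Fin N → ℕ) (l : List (Fin N))
    {F : P → (Fin N → ℝ) → ℝ} {s : Set P} (hs : IsOpen s)
    (hF : ContDiffOn ℝ (⊤ : ℕ∞) (uncurry F) (s ×ˢ (univ : Set (Fin N → ℝ)))) :
    ContDiffOn ℝ (⊤ : ℕ∞)
      (uncurry fun p => l.foldr (fun k g => (pderiv' k)^[α k] g) (F p)) (s ×ˢ univ) := by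
  induction l generalizing F with
  | nil => simpa using hF
  | cons k l ih =>
      have := contDiffOn_pderiv'_iter k (α k) hs
        (F := fun p => l.foldr (fun k g => (pderiv' k)^[α k] g) (F p)) (ih hF)
      simpa using this

lemma contDiffOn_mderiv {N : ℕ} (α : Fin N → ℕ) {F : P → (Fin N → ℝ) → ℝ} {s : Set P}
    (hs : IsOpen s)
    (hF : ContDiffOn ℝ (⊤ : ℕ∞) (uncurry F) (s ×ˢ (univ : Set (Fin N → ℝ)))) :
    ContDiffOn ℝ (⊤ : ℕ∞) (uncurry fun p => mderiv α (F p)) (s ×ˢ univ) := by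
  unfold mderiv
  exact contDiffOn_foldr α (List.finRange N) hs hF

end Aux2

lemma contDiffOn_gaussKernel (N : ℕ) :
    ContDiffOn ℝ (⊤ : ℕ∞) (uncurry (gaussKernel N))
      ((Ioi (0:ℝ)) ×ˢ (univ : Set (Fin N → ℝ))) := by
  intro q hq
  apply ContDiffAt.contDiffWithinAt
  have hq1 : (0:ℝ) < q.1 := hq.1
  have h4 : (4 * Real.pi * q.1) ≠ 0 := by positivity
  have h4' : (4 * q.1) ≠ 0 := by positivity
  have hA : ContDiffAt ℝ (⊤ : ℕ∞) (fun q : ℝ × (Fin N → ℝ) =>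
      (4 * Real.pi * q.1) ^ (-(N:ℝ) / 2)) q := by
    exact (Real.contDiffAt_rpow_const_of_ne h4).comp q
      ((contDiffAt_const.mul contDiffAt_fst))
  have hB : ContDiffAt ℝ (⊤ : ℕ∞) (fun q : ℝ × (Fin N → ℝ) =>
      Real.exp (-(∑ k, (q.2 k) ^ 2) / (4 * q.1))) q := by
    refine Real.contDiff_exp.contDiffAt.comp q (ContDiffAt.div ?_ ?_ h4')
    · exact (ContDiff.neg (ContDiff.sum fun k _ =>
        (((ContinuousLinearMap.proj (R := ℝ) (φ := fun _ : Fin N => ℝ) k).contDiff.comp contDiff_snd).pow 2))).contDiffAt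
    · exact (contDiffAt_const.mul contDiffAt_fst)
  exact hA.mul hB

/-- For a directed graph `Γ` without self-loops, multi-indices `α_e`, and a smooth
compactly supported `Φ`, the spacetime integral
`F((t_e)) = ∫ ∏_e (∂_y^{α_e} G_N)(t_e, y^{h(e)} - y^{t(e)}) Φ(y) dy`
is a smooth function of the Schwinger parameters on `(0, ∞)^{Γ₁}`. -/
theorem feynman_integrand_smooth_in_schwinger_parameters {n m : ℕ} (N : ℕ) (hN : 1 ≤ N)
    (G : DGraph n m) (α : Fin m → Fin N → ℕ)
    (Φ : (Fin (n + 1) → Fin N → ℝ) → ℝ) (hΦ : ContDiff ℝ (⊤ : ℕ∞) Φ)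
    (hsupp : HasCompactSupport Φ) :
    ContDiffOn ℝ (⊤ : ℕ∞)
      (fun T : Fin m → ℝ =>
        ∫ y : Fin (n + 1) → Fin N → ℝ,
          (∏ e, mderiv (α e) (fun w => gaussKernel N (T e) w)
              (y (G.head e) - y (G.tail e))) * Φ y)
      {T : Fin m → ℝ | ∀ e, 0 < T e} := by
  classical
  set s : Set (Fin m → ℝ) := {T | ∀ e, 0 < T e} with hs_def
  have hs : IsOpen s := by
    have h : s = Set.univ.pi (fun _ : Fin m => Ioi (0:ℝ)) := by
      ext T; simp [s, Set.mem_pi]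
    rw [h]; exact isOpen_set_pi Set.finite_univ (fun _ _ => isOpen_Ioi)
  set g : (Fin m → ℝ) → (Fin (n+1) → Fin N → ℝ) → ℝ := fun T y =>
    (∏ e, mderiv (α e) (fun w => gaussKernel N (T e) w)
        (y (G.head e) - y (G.tail e))) * Φ y with hg_def
  have hFe : ∀ e : Fin m, ContDiffOn ℝ (⊤:ℕ∞)
      (uncurry fun t => mderiv (α e) (gaussKernel N t)) ((Ioi (0:ℝ)) ×ˢ univ) :=
    fun e => contDiffOn_mderiv (α e) isOpen_Ioi (contDiffOn_gaussKernel N)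
  have hψ : ∀ e : Fin m, ContDiff ℝ (⊤:ℕ∞)
      (fun q : (Fin m → ℝ) × (Fin (n+1) → Fin N → ℝ) =>
        ((q.1 e, q.2 (G.head e) - q.2 (G.tail e)) : ℝ × (Fin N → ℝ))) := by
    intro e
    refine ContDiff.prodMk ?_ (ContDiff.sub ?_ ?_)
    · exact (ContinuousLinearMap.proj (R := ℝ) (φ := fun _ : Fin m => ℝ)
        e).contDiff.comp contDiff_fst
    · exact (ContinuousLinearMap.proj (R := ℝ) (φ := fun _ : Fin (n+1) => Fin N → ℝ)
        (G.head e)).contDiff.comp contDiff_snd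
    · exact (ContinuousLinearMap.proj (R := ℝ) (φ := fun _ : Fin (n+1) => Fin N → ℝ)
        (G.tail e)).contDiff.comp contDiff_snd
  have hg : ContDiffOn ℝ (⊤:ℕ∞) (uncurry g) (s ×ˢ univ) := by
    apply ContDiffOn.mul
    · apply contDiffOn_prod
      intro e _
      refine ((hFe e).comp ((hψ e).contDiffOn) ?_)
      rintro ⟨T, y⟩ ⟨hT, -⟩
      exact ⟨hT e, mem_univ _⟩
    · exact (hΦ.comp contDiff_snd).contDiffOn
  have hgs : ∀ (T : Fin m → ℝ) (y : Fin (n+1) → Fin N → ℝ),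
      T ∈ s → y ∉ tsupport Φ → g T y = 0 := by
    intro T y _ hy
    simp [hg_def, image_eq_zero_of_notMem_tsupport hy]
  have key := contDiffOn_convolution_right_with_param_comp
    (𝕜 := ℝ) (μ := MeasureTheory.volume)
    (L := ContinuousLinearMap.mul ℝ ℝ)
    (v := fun _ : Fin m → ℝ => (0 : Fin (n+1) → Fin N → ℝ))
    (contDiffOn_const) (f := fun _ => (1:ℝ)) (g := g)
    hs hsupp hgs (MeasureTheory.locallyIntegrable_const _) hg
  refine key.congr ?_
  intro T hT
  show (∫ y, g T y) = _
  rw [MeasureTheory.convolution_def]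
  simp only [ContinuousLinearMap.mul_apply', one_mul, zero_sub]
  exact (MeasureTheory.integral_neg_eq_self _ _).symm
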